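/- Let N ≥ 1 be an integer, c₀, …, c_N ≥ 0 real constants with c_N > 0, and a, b > 0 constants. Define g : ℝ_{>0} → ℝ_{>0} by g(y) = a·y·(Σ_{k=0}^{N} c_k b^{−2k} y^{2k})^{−1/N}. Then on the set where g(y) = y (i.e. Σ c_k b^{−2k} y^{2k} = a^N), if moreover g'(y) = −1 at such a point, then c_k = 0 for all k = 0, …, N−1. -/

import Mathlib

open Finset

/-- Computational core of Proposition `neggrad`: for
`g(y) = a·y·(Σ_{k=0}^{N} c_k b^{−2k} y^{2k})^{−1/N}` with `c_k ≥ 0`, `c_N > 0`,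
`a, b > 0`, at a point `y > 0` where `g(y) = y` (equivalently
`Σ c_k b^{−2k} y^{2k} = a^N`) and `g'(y) = −1`, all intermediate coefficients
`c_0, …, c_{N−1}` vanish. -/
theorem neggrad_core (N : ℕ) (hN : 1 ≤ N)
    (c : ℕ → ℝ) (hc : ∀ k ≤ N, 0 ≤ c k) (hcN : 0 < c N)
    (a b : ℝ) (ha : 0 < a) (hb : 0 < b)
    (g : ℝ → ℝ)
    (hg : ∀ y > (0 : ℝ), g y =
      a * y * (∑ k ∈ range (N + 1), c k * (b ^ (2 * k))⁻¹ * y ^ (2 * k)) ^ (-1 / (N : ℝ)))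
    (y : ℝ) (hy : 0 < y)
    (hgy : g y = y)
    (hsum : ∑ k ∈ range (N + 1), c k * (b ^ (2 * k))⁻¹ * y ^ (2 * k) = a ^ N)
    (hderiv : HasDerivAt g (-1) y) :
    ∀ k < N, c k = 0 := by
  have hN0 : (N : ℝ) ≠ 0 := Nat.cast_ne_zero.mpr (by omega)
  set r : ℝ := -1 / N with hr
  set S : ℝ → ℝ := fun t => ∑ j ∈ range (N + 1), c j * (b ^ (2 * j))⁻¹ * t ^ (2 * j) with hSdef
  set S' : ℝ := ∑ j ∈ range (N + 1), c j * (b ^ (2 * j))⁻¹ * ((2 * j : ℕ) * y ^ (2 * j - 1)) with hS'def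
  have hSy : S y = a ^ N := hsum
  have haN : (0:ℝ) < a ^ N := by positivity
  -- derivative of S
  have hS : HasDerivAt S S' y := by
    apply HasDerivAt.fun_sum
    intro j _
    simpa [mul_assoc] using (hasDerivAt_pow (2 * j) y).const_mul (c j * (b ^ (2 * j))⁻¹)
  -- derivative of the explicit expression
  have hD : HasDerivAt (fun t => a * t * S t ^ r)
      (a * 1 * S y ^ r + a * y * (S' * r * S y ^ (r - 1))) y := by
    have h1 : HasDerivAt (fun t : ℝ => a * t) (a * 1) y := (hasDerivAt_id y).const_mul a
    have h2 : HasDerivAt (fun t => S t ^ r) (S' * r * S y ^ (r - 1)) y :=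
      hS.rpow_const (Or.inl (by rw [hSy]; exact haN.ne'))
    exact h1.mul h2
  -- g agrees with the expression near y
  have heq : g =ᶠ[nhds y] fun t => a * t * S t ^ r := by
    filter_upwards [isOpen_Ioi.mem_nhds hy] with t ht
    exact hg t ht
  have hD' : HasDerivAt g (a * 1 * S y ^ r + a * y * (S' * r * S y ^ (r - 1))) y :=
    hD.congr_of_eventuallyEq heq
  have hDval : a * 1 * S y ^ r + a * y * (S' * r * S y ^ (r - 1)) = -1 := hD'.unique hderiv
  -- rpow computations
  have h1 : (a ^ N : ℝ) ^ r = a⁻¹ := by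
    rw [← Real.rpow_natCast a N, ← Real.rpow_mul ha.le,
      show (N : ℝ) * r = -1 by rw [hr]; field_simp]
    exact Real.rpow_neg_one a
  have h2 : (a ^ N : ℝ) ^ (r - 1) = a⁻¹ * (a ^ N)⁻¹ := by
    rw [show r - 1 = r + (-1) by ring, Real.rpow_add haN, h1, Real.rpow_neg_one]
  rw [hSy, h1, h2] at hDval
  -- derive y * S' = 2 N a^N
  have hyS' : y * S' = 2 * N * a ^ N := by
    have haa : a * a⁻¹ = 1 := mul_inv_cancel₀ ha.ne'
    rw [hr] at hDval; field_simp at hDval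
    nlinarith [hDval, haN, ha]
  -- y * S' equals the weighted sum
  have hyS2 : y * S' = ∑ j ∈ range (N + 1), (2 * j : ℕ) * (c j * (b ^ (2 * j))⁻¹ * y ^ (2 * j)) := by
    rw [hS'def, Finset.mul_sum]
    refine Finset.sum_congr rfl fun j _ => ?_
    rcases Nat.eq_zero_or_pos j with h | h
    · simp [h]
    · have hpow : y * y ^ (2 * j - 1) = y ^ (2 * j) := by
        rw [← pow_succ']
        congr 1
        omega
      calc y * (c j * (b ^ (2 * j))⁻¹ * ((2 * j : ℕ) * y ^ (2 * j - 1)))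
          = (2 * j : ℕ) * (c j * (b ^ (2 * j))⁻¹ * (y * y ^ (2 * j - 1))) := by ring
        _ = _ := by rw [hpow]
  -- the key vanishing sum
  have hkey : ∑ j ∈ range (N + 1),
      ((2 * N - 2 * j : ℝ)) * (c j * (b ^ (2 * j))⁻¹ * y ^ (2 * j)) = 0 := by
    have : ∑ j ∈ range (N + 1),
        ((2 * N - 2 * j : ℝ)) * (c j * (b ^ (2 * j))⁻¹ * y ^ (2 * j))
        = 2 * N * (∑ j ∈ range (N + 1), c j * (b ^ (2 * j))⁻¹ * y ^ (2 * j))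
          - ∑ j ∈ range (N + 1), (2 * j : ℕ) * (c j * (b ^ (2 * j))⁻¹ * y ^ (2 * j)) := by
      rw [Finset.mul_sum, ← Finset.sum_sub_distrib]
      refine Finset.sum_congr rfl fun j _ => ?_
      push_cast
      ring
    rw [this, hsum, ← hyS2, hyS']
    ring
  -- each term is nonneg, hence zero
  have hterm : ∀ j ∈ range (N + 1),
      ((2 * N - 2 * j : ℝ)) * (c j * (b ^ (2 * j))⁻¹ * y ^ (2 * j)) = 0 := by
    refine (Finset.sum_eq_zero_iff_of_nonneg ?_).mp hkey
    intro j hj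
    rw [Finset.mem_range] at hj
    have hjN : j ≤ N := by omega
    have h2N : (0:ℝ) ≤ 2 * N - 2 * j := by
      have : (j:ℝ) ≤ N := by exact_mod_cast hjN
      linarith
    have := hc j hjN
    positivity
  intro k hk
  have hk' := hterm k (Finset.mem_range.mpr (by omega))
  have hkN : (0:ℝ) < 2 * N - 2 * k := by
    have : (k:ℝ) < N := by exact_mod_cast hk
    linarith
  have hb' : (0:ℝ) < (b ^ (2 * k))⁻¹ := by positivity
  have hy' : (0:ℝ) < y ^ (2 * k) := by positivity
  rcases mul_eq_zero.mp hk' with h | h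
  · linarith
  · rcases mul_eq_zero.mp h with h' | h'
    · rcases mul_eq_zero.mp h' with h'' | h''
      · exact h''
      · exact absurd h'' hb'.ne'
    · exact absurd h' hy'.ne'
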